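/- Given an interval total t-coloring φ of the hypercube Q_n, the edge coloring ψ of Q_{n+1} defined by coloring each edge within either copy Q_{n+1}^{(i)} (i ∈ {0,1}) of Q_n by φ's color of the corresponding edge, and coloring the edge between (0,ᾱ) and (1,ᾱ) by φ(ᾱ), is an interval edge t-coloring of Q_{n+1}. -/

import Mathlib

namespace ITC

variable {V : Type*}

/-- A total coloring: proper on vertices, edges, and incident vertex-edge pairs. -/
def IsTotalColoring (G : SimpleGraph V) (cv : V → ℕ) (ce : Sym2 V → ℕ) : Prop :=
  (∀ u v, G.Adj u v → cv u ≠ cv v) ∧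
  (∀ e f, e ∈ G.edgeSet → f ∈ G.edgeSet → e ≠ f → (∃ w, w ∈ e ∧ w ∈ f) → ce e ≠ ce f) ∧
  (∀ v e, e ∈ G.edgeSet → v ∈ e → cv v ≠ ce e)

/-- The set of colors on a vertex `v` together with its incident edges. -/
def palette (G : SimpleGraph V) (cv : V → ℕ) (ce : Sym2 V → ℕ) (v : V) : Set ℕ :=
  insert (cv v) {c | ∃ e ∈ G.edgeSet, v ∈ e ∧ ce e = c}

/-- Degree of a vertex. -/
noncomputable def deg (G : SimpleGraph V) (v : V) : ℕ := (G.neighborSet v).ncard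

/-- An interval total `t`-coloring. -/
def IsIntervalTotalColoring (G : SimpleGraph V) (t : ℕ) (cv : V → ℕ)
    (ce : Sym2 V → ℕ) : Prop :=
  IsTotalColoring G cv ce ∧
  (∀ v, cv v ∈ Set.Icc 1 t) ∧ (∀ e ∈ G.edgeSet, ce e ∈ Set.Icc 1 t) ∧
  (∀ c ∈ Set.Icc 1 t, (∃ v, cv v = c) ∨ (∃ e ∈ G.edgeSet, ce e = c)) ∧
  (∀ v, ∃ a, palette G cv ce v = Set.Icc a (a + deg G v))

def HasIntervalTotalColoring (G : SimpleGraph V) (t : ℕ) : Prop :=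
  ∃ cv ce, IsIntervalTotalColoring G t cv ce

/-- Minimum span of interval total colorings. -/
noncomputable def wtau (G : SimpleGraph V) : ℕ := sInf {t | HasIntervalTotalColoring G t}

/-- Maximum span of interval total colorings. -/
noncomputable def Wtau (G : SimpleGraph V) : ℕ := sSup {t | HasIntervalTotalColoring G t}

/-- Total chromatic number: least `k` such that there is a total coloring
with colors in `{1, …, k}`. -/
noncomputable def totalChromaticNumber (G : SimpleGraph V) : ℕ :=
  sInf {k | ∃ cv ce, IsTotalColoring G cv ce ∧ (∀ v, cv v ∈ Set.Icc 1 k) ∧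
    ∀ e ∈ G.edgeSet, ce e ∈ Set.Icc 1 k}

/-- A proper edge coloring. -/
def IsProperEdgeColoring (G : SimpleGraph V) (ce : Sym2 V → ℕ) : Prop :=
  ∀ e f, e ∈ G.edgeSet → f ∈ G.edgeSet → e ≠ f → (∃ w, w ∈ e ∧ w ∈ f) → ce e ≠ ce f

/-- Colors appearing on the edges incident to `v`. -/
def edgePalette (G : SimpleGraph V) (ce : Sym2 V → ℕ) (v : V) : Set ℕ :=
  {c | ∃ e ∈ G.edgeSet, v ∈ e ∧ ce e = c}

/-- An interval (edge) `t`-coloring. -/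
def IsIntervalEdgeColoring (G : SimpleGraph V) (t : ℕ) (ce : Sym2 V → ℕ) : Prop :=
  IsProperEdgeColoring G ce ∧
  (∀ e ∈ G.edgeSet, ce e ∈ Set.Icc 1 t) ∧
  (∀ c ∈ Set.Icc 1 t, ∃ e ∈ G.edgeSet, ce e = c) ∧
  (∀ v, ∃ a, edgePalette G ce v = Set.Icc (a + 1) (a + deg G v))

/-- The hypercube `Q_n`. -/
def hypercube (n : ℕ) : SimpleGraph (Fin n → Bool) where
  Adj u v := ∃! i, u i ≠ v i
  symm := by
    constructor
    rintro u v ⟨i, hi, hu⟩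
    exact ⟨i, Ne.symm hi, fun j hj => hu j (Ne.symm hj)⟩
  loopless := by
    constructor
    rintro u ⟨i, hi, -⟩
    exact hi rfl

/-- The complete graph on `Fin (2*r)` minus the perfect matching joining `i` and `i+r`. -/
def Kminus (r : ℕ) : SimpleGraph (Fin (2 * r)) where
  Adj i j := i ≠ j ∧ ¬((i : ℕ) + r = (j : ℕ) ∨ (j : ℕ) + r = (i : ℕ))
  symm := by
    constructor
    rintro i j ⟨h1, h2⟩
    exact ⟨h1.symm, fun h => h2 h.symm⟩
  loopless := by
    constructor
    rintro i ⟨h1, -⟩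
    exact h1 rfl

/-- Blow up each vertex of `H` into a copy of `β` (no edges inside copies). -/
def blowup {α : Type*} (H : SimpleGraph α) (β : Type*) : SimpleGraph (α × β) where
  Adj u v := H.Adj u.1 v.1
  symm := ⟨fun _ _ h => h.symm⟩
  loopless := ⟨fun u h => H.irrefl h⟩


section Aux
variable {n : ℕ}

lemma exists_other {V : Type*} {G : SimpleGraph V} {v : V} {e : Sym2 V}
    (he : e ∈ G.edgeSet) (hv : v ∈ e) : ∃ x, G.Adj v x ∧ e = s(v, x) := by
  induction e using Sym2.ind with | _ a b =>
  rw [SimpleGraph.mem_edgeSet] at he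
  rcases Sym2.mem_iff.mp hv with rfl | rfl
  · exact ⟨b, he, rfl⟩
  · exact ⟨a, he.symm, Sym2.eq_swap.symm⟩

lemma tail_adj {u v : Fin (n+1) → Bool} (h : (hypercube (n+1)).Adj u v)
    (h0 : u 0 = v 0) : (hypercube n).Adj (Fin.tail u) (Fin.tail v) := by
  obtain ⟨i, hi, hu⟩ := h
  induction i using Fin.cases with
  | zero => exact absurd h0 hi
  | succ k =>
    refine ⟨k, hi, fun j hj => ?_⟩
    exact Fin.succ_injective _ (hu j.succ hj)

lemma cross_tail_eq {u v : Fin (n+1) → Bool} (h : (hypercube (n+1)).Adj u v)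
    (h0 : u 0 ≠ v 0) : Fin.tail u = Fin.tail v := by
  obtain ⟨i, hi, hu⟩ := h
  funext k
  by_contra hk
  have h1 := hu k.succ hk
  have h2 := hu 0 h0
  exact Fin.succ_ne_zero k (h1.trans h2.symm)

lemma eq_of_tail_eq {u v : Fin (n+1) → Bool} (h0 : u 0 = v 0)
    (ht : Fin.tail u = Fin.tail v) : u = v := by
  funext i
  induction i using Fin.cases with
  | zero => exact h0
  | succ k => exact congrFun ht k

lemma adj_cons {b : Bool} {x y : Fin n → Bool} (h : (hypercube n).Adj x y) :
    (hypercube (n+1)).Adj (Fin.cons b x) (Fin.cons b y) := by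
  obtain ⟨i, hi, hx⟩ := h
  refine ⟨i.succ, by simpa using hi, fun j hj => ?_⟩
  induction j using Fin.cases with
  | zero => simp at hj
  | succ k => simp only [Fin.cons_succ] at hj; rw [hx k hj]

lemma adj_cross {b b' : Bool} (hb : b ≠ b') (x : Fin n → Bool) :
    (hypercube (n+1)).Adj (Fin.cons b x) (Fin.cons b' x) := by
  refine ⟨0, by simpa using hb, fun j hj => ?_⟩
  induction j using Fin.cases with
  | zero => rfl
  | succ k => simp at hj

lemma adj_cross' (v : Fin (n+1) → Bool) :
    (hypercube (n+1)).Adj v (Fin.cons (!(v 0)) (Fin.tail v)) := by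
  refine ⟨0, by simp, fun j hj => ?_⟩
  induction j using Fin.cases with
  | zero => rfl
  | succ k => simp [Fin.cons_succ, Fin.tail] at hj

lemma adj_lift (v : Fin (n+1) → Bool) {y : Fin n → Bool}
    (h : (hypercube n).Adj (Fin.tail v) y) :
    (hypercube (n+1)).Adj v (Fin.cons (v 0) y) := by
  obtain ⟨i, hi, hx⟩ := h
  refine ⟨i.succ, by simpa [Fin.cons_succ, Fin.tail] using hi, fun j hj => ?_⟩
  induction j using Fin.cases with
  | zero => simp [Fin.cons_zero] at hj
  | succ k =>
    have hk : Fin.tail v k ≠ y k := by simpa [Fin.cons_succ, Fin.tail] using hj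
    rw [hx k hk]

lemma neighborSet_eq (m : ℕ) (v : Fin m → Bool) :
    (hypercube m).neighborSet v = Set.range (fun i : Fin m => Function.update v i (!v i)) := by
  ext u
  constructor
  · rintro ⟨i, hi, hv⟩
    refine ⟨i, ?_⟩
    funext j
    show Function.update v i (!v i) j = u j
    by_cases hj : j = i
    · subst hj
      rw [Function.update_self]
      revert hi; cases v j <;> cases u j <;> simp
    · rw [Function.update_of_ne hj]
      by_contra hne
      exact hj (hv j hne)
  · rintro ⟨i, rfl⟩
    refine ⟨i, by simp, fun j hj => ?_⟩
    simp only at hj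
    by_contra hne
    rw [Function.update_of_ne hne] at hj
    exact hj rfl

lemma deg_hypercube (m : ℕ) (v : Fin m → Bool) : deg (hypercube m) v = m := by
  show ((hypercube m).neighborSet v).ncard = m
  rw [neighborSet_eq]
  have hinj : Function.Injective (fun i : Fin m => Function.update v i (!v i)) := by
    intro i j hij
    by_contra hne
    have := congrFun hij i
    simp only [Function.update_self, Function.update_of_ne hne] at this
    revert this; cases v i <;> simp
  have h2 : (Set.range (fun i : Fin m => Function.update v i (!v i))).ncard
      = Nat.card (Set.range (fun i : Fin m => Function.update v i (!v i))) := rfl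
  rw [h2, Nat.card_range_of_injective hinj, Nat.card_eq_fintype_card, Fintype.card_fin]

end Aux



theorem stmt9 (n t : ℕ) (cv : (Fin n → Bool) → ℕ) (ce : Sym2 (Fin n → Bool) → ℕ)
    (hφ : IsIntervalTotalColoring (hypercube n) t cv ce)
    (ψ : Sym2 (Fin (n + 1) → Bool) → ℕ)
    (hψ₁ : ∀ u v : Fin (n + 1) → Bool, (hypercube (n + 1)).Adj u v → u 0 = v 0 →
      ψ s(u, v) = ce s(Fin.tail u, Fin.tail v))
    (hψ₂ : ∀ u v : Fin (n + 1) → Bool, (hypercube (n + 1)).Adj u v → u 0 ≠ v 0 →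
      ψ s(u, v) = cv (Fin.tail u)) :
    IsIntervalEdgeColoring (hypercube (n + 1)) t ψ := by
  obtain ⟨⟨hcv, hce, hcve⟩, hcvB, hceB, hsurj, hpal⟩ := hφ
  refine ⟨?_, ?_, ?_, ?_⟩
  · -- proper edge coloring
    rintro e f he hf hef ⟨w, hwe, hwf⟩
    obtain ⟨x, hax, rfl⟩ := exists_other he hwe
    obtain ⟨y, hay, rfl⟩ := exists_other hf hwf
    have hxy : x ≠ y := fun h => hef (by rw [h])
    by_cases h1 : w 0 = x 0 <;> by_cases h2 : w 0 = y 0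
    · rw [hψ₁ w x hax h1, hψ₁ w y hay h2]
      refine hce _ _ ((SimpleGraph.mem_edgeSet _).mpr (tail_adj hax h1))
        ((SimpleGraph.mem_edgeSet _).mpr (tail_adj hay h2)) ?_
        ⟨Fin.tail w, Sym2.mem_mk_left _ _, Sym2.mem_mk_left _ _⟩
      intro hcontra
      exact hxy (eq_of_tail_eq (h1.symm.trans h2) (Sym2.congr_right.mp hcontra))
    · rw [hψ₁ w x hax h1, hψ₂ w y hay h2]
      exact (hcve (Fin.tail w) _ ((SimpleGraph.mem_edgeSet _).mpr (tail_adj hax h1))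
        (Sym2.mem_mk_left _ _)).symm
    · rw [hψ₂ w x hax h1, hψ₁ w y hay h2]
      exact hcve (Fin.tail w) _ ((SimpleGraph.mem_edgeSet _).mpr (tail_adj hay h2))
        (Sym2.mem_mk_left _ _)
    · exfalso
      have ht : Fin.tail x = Fin.tail y :=
        (cross_tail_eq hax h1).symm.trans (cross_tail_eq hay h2)
      have h0 : x 0 = y 0 := by
        revert h1 h2; cases w 0 <;> cases x 0 <;> cases y 0 <;> simp
      exact hxy (eq_of_tail_eq h0 ht)
  · -- colors in range
    intro e he
    induction e using Sym2.ind with | _ u x =>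
    rw [SimpleGraph.mem_edgeSet] at he
    by_cases h0 : u 0 = x 0
    · rw [hψ₁ u x he h0]
      exact hceB _ ((SimpleGraph.mem_edgeSet _).mpr (tail_adj he h0))
    · rw [hψ₂ u x he h0]
      exact hcvB _
  · -- all colors used
    intro c hc
    rcases hsurj c hc with ⟨v, hv⟩ | ⟨e, he, hcee⟩
    · have hadj : (hypercube (n+1)).Adj (Fin.cons false v) (Fin.cons true v) :=
        adj_cross (by simp) v
      refine ⟨s(Fin.cons false v, Fin.cons true v), (SimpleGraph.mem_edgeSet _).mpr hadj, ?_⟩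
      rw [hψ₂ _ _ hadj (by simp)]
      simpa [Fin.tail_cons] using hv
    · induction e using Sym2.ind with | _ x y =>
      rw [SimpleGraph.mem_edgeSet] at he
      have hadj : (hypercube (n+1)).Adj (Fin.cons false x) (Fin.cons false y) :=
        adj_cons he
      refine ⟨s(Fin.cons false x, Fin.cons false y), (SimpleGraph.mem_edgeSet _).mpr hadj, ?_⟩
      rw [hψ₁ _ _ hadj (by simp)]
      simpa [Fin.tail_cons] using hcee
  · -- interval palettes
    intro v
    have hEP : edgePalette (hypercube (n+1)) ψ v = palette (hypercube n) cv ce (Fin.tail v) := by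
      ext c
      constructor
      · rintro ⟨e, he, hve, rfl⟩
        obtain ⟨x, hax, rfl⟩ := exists_other he hve
        by_cases h0 : v 0 = x 0
        · rw [hψ₁ v x hax h0]
          exact Set.mem_insert_iff.mpr (Or.inr ⟨s(Fin.tail v, Fin.tail x),
            (SimpleGraph.mem_edgeSet _).mpr (tail_adj hax h0), Sym2.mem_mk_left _ _, rfl⟩)
        · rw [hψ₂ v x hax h0]
          exact Set.mem_insert _ _
      · intro hc
        rcases Set.mem_insert_iff.mp hc with rfl | ⟨e, he, hve, rfl⟩
        · exact ⟨s(v, Fin.cons (!(v 0)) (Fin.tail v)),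
            (SimpleGraph.mem_edgeSet _).mpr (adj_cross' v), Sym2.mem_mk_left _ _,
            by rw [hψ₂ _ _ (adj_cross' v) (by simp)]⟩
        · obtain ⟨y, hay, rfl⟩ := exists_other he hve
          refine ⟨s(v, Fin.cons (v 0) y),
            (SimpleGraph.mem_edgeSet _).mpr (adj_lift v hay), Sym2.mem_mk_left _ _, ?_⟩
          rw [hψ₁ _ _ (adj_lift v hay) (by simp)]
          simp [Fin.tail_cons]
    obtain ⟨a, ha⟩ := hpal (Fin.tail v)
    rw [deg_hypercube] at ha
    have ha1 : 1 ≤ a := by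
      have hmem : a ∈ palette (hypercube n) cv ce (Fin.tail v) := by
        rw [ha]; exact ⟨le_refl a, Nat.le_add_right a n⟩
      rcases Set.mem_insert_iff.mp hmem with h | ⟨e, he, -, h⟩
      · rw [h]; exact (hcvB _).1
      · rw [← h]; exact (hceB e he).1
    refine ⟨a - 1, ?_⟩
    rw [hEP, ha, deg_hypercube,
      show a - 1 + 1 = a from by omega, show a - 1 + (n + 1) = a + n from by omega]


end ITC
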